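/- For every even integer k ≥ 2, if the rational number 2k/B_k is an integer, where B_k denotes the k-th Bernoulli number (which is nonzero for even k), then k ∈ {2, 4, 6, 8, 10, 14}. -/

import Mathlib

open Finset Nat

private lemma bo5 : bernoulli' 5 = 0 := bernoulli'_eq_zero_of_odd (by decide) (by norm_num)
private lemma bo7 : bernoulli' 7 = 0 := bernoulli'_eq_zero_of_odd (by decide) (by norm_num)
private lemma bo9 : bernoulli' 9 = 0 := bernoulli'_eq_zero_of_odd (by decide) (by norm_num)
private lemma bo11 : bernoulli' 11 = 0 := bernoulli'_eq_zero_of_odd (by decide) (by norm_num)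
private lemma bo13 : bernoulli' 13 = 0 := bernoulli'_eq_zero_of_odd (by decide) (by norm_num)
private lemma bo15 : bernoulli' 15 = 0 := bernoulli'_eq_zero_of_odd (by decide) (by norm_num)

private lemma be4 : bernoulli' 4 = -1/30 := by
  rw [bernoulli'_def]
  simp only [sum_range_succ, sum_range_zero, bernoulli'_zero, bernoulli'_one, bernoulli'_two,
    bernoulli'_three]
  norm_num [Nat.choose]

private lemma be6 : bernoulli' 6 = 1/42 := by
  rw [bernoulli'_def]
  simp only [sum_range_succ, sum_range_zero, bernoulli'_zero, bernoulli'_one, bernoulli'_two,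
    bernoulli'_three, be4, bo5]
  norm_num [Nat.choose]

private lemma be8 : bernoulli' 8 = -1/30 := by
  rw [bernoulli'_def]
  simp only [sum_range_succ, sum_range_zero, bernoulli'_zero, bernoulli'_one, bernoulli'_two,
    bernoulli'_three, be4, bo5, be6, bo7]
  norm_num [Nat.choose]

private lemma be10 : bernoulli' 10 = 5/66 := by
  rw [bernoulli'_def]
  simp only [sum_range_succ, sum_range_zero, bernoulli'_zero, bernoulli'_one, bernoulli'_two,
    bernoulli'_three, be4, bo5, be6, bo7, be8, bo9]
  norm_num [Nat.choose]

private lemma be12 : bernoulli' 12 = -691/2730 := by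
  rw [bernoulli'_def]
  simp only [sum_range_succ, sum_range_zero, bernoulli'_zero, bernoulli'_one, bernoulli'_two,
    bernoulli'_three, be4, bo5, be6, bo7, be8, bo9, be10, bo11]
  norm_num [Nat.choose]

private lemma be14 : bernoulli' 14 = 7/6 := by
  rw [bernoulli'_def]
  simp only [sum_range_succ, sum_range_zero, bernoulli'_zero, bernoulli'_one, bernoulli'_two,
    bernoulli'_three, be4, bo5, be6, bo7, be8, bo9, be10, bo11, be12, bo13]
  norm_num [Nat.choose]

private lemma be16 : bernoulli' 16 = -3617/510 := by
  rw [bernoulli'_def]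
  simp only [sum_range_succ, sum_range_zero, bernoulli'_zero, bernoulli'_one, bernoulli'_two,
    bernoulli'_three, be4, bo5, be6, bo7, be8, bo9, be10, bo11, be12, bo13, be14, bo15]
  norm_num [Nat.choose]

private lemma bern12 : bernoulli 12 = -691/2730 := by
  rw [bernoulli_eq_bernoulli'_of_ne_one (by norm_num), be12]

private lemma bern16 : bernoulli 16 = -3617/510 := by
  rw [bernoulli_eq_bernoulli'_of_ne_one (by norm_num), be16]

open Real in
private lemma bern_lb (n : ℕ) (hn : n ≠ 0) :
    ((2*n)! : ℝ) ≤ 2^(2*n-1) * π^(2*n) * |((bernoulli (2*n) : ℚ) : ℝ)| := by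
  have hs := hasSum_zeta_nat hn
  have h1 : (1:ℝ) ≤ (-1:ℝ)^(n+1) * 2^(2*n-1) * π^(2*n) * (bernoulli (2*n) : ℝ) / (2*n)! := by
    have := le_hasSum hs 1 (fun i _ => by positivity)
    simpa using this
  have hfac : (0:ℝ) < ((2*n)! : ℝ) := by positivity
  have h2 := h1.trans (le_abs_self _)
  rw [abs_div, abs_mul, abs_mul, abs_mul, abs_pow, abs_neg, abs_one, one_pow, one_mul,
    abs_of_nonneg (by positivity : (0:ℝ) ≤ (2:ℝ)^(2*n-1)),
    abs_of_nonneg (by positivity : (0:ℝ) ≤ π^(2*n)),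
    abs_of_nonneg hfac.le, le_div_iff₀ hfac] at h2
  linarith

private lemma fact_gt : ∀ k : ℕ, 18 ≤ k → (k : ℝ) * (63/10)^k < (k)! := by
  intro k hk
  induction k, hk using Nat.le_induction with
  | base => norm_num [Nat.factorial]
  | succ k hk ih =>
    have hpow : (0:ℝ) < (63/10)^k := by positivity
    have hk' : ((63:ℝ)/10) ≤ (k:ℝ) := by
      have : (18:ℝ) ≤ (k:ℝ) := by exact_mod_cast hk
      linarith
    calc ((k+1 : ℕ) : ℝ) * (63/10)^(k+1)
        = ((k:ℝ)+1) * ((63/10) * (63/10)^k) := by push_cast; ring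
      _ ≤ ((k:ℝ)+1) * ((k:ℝ) * (63/10)^k) := by
          apply mul_le_mul_of_nonneg_left (mul_le_mul_of_nonneg_right hk' hpow.le)
          positivity
      _ < ((k:ℝ)+1) * (k)! := by
          apply (mul_lt_mul_iff_right₀ (by positivity)).2 ih
      _ = ((k+1)! : ℝ) := by rw [Nat.factorial_succ]; push_cast; ring

open Real in
private lemma num_big {k : ℕ} (hk : 18 ≤ k) (hke : Even k) :
    (2*k : ℝ) < |((bernoulli k : ℚ) : ℝ)| := by
  obtain ⟨n, hn⟩ := hke
  have h2n : 2*n = k := by omega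
  have hb := bern_lb n (by omega)
  rw [h2n] at hb
  have hfR : (k:ℝ) * (63/10)^k < (k)! := fact_gt k hk
  have hpi : π ≤ 3.15 := Real.pi_lt_d2.le
  have hp2 : (2:ℝ)^(k-1) * π^k ≤ (63/10)^k / 2 := by
    have hπk : π^k ≤ (3.15:ℝ)^k := pow_le_pow_left₀ Real.pi_pos.le hpi k
    have h2k : (2:ℝ)^(k-1) * 2 = 2^k := by
      rw [← pow_succ]
      congr 1
      omega
    have : (2:ℝ)^(k-1) * π^k * 2 ≤ 2^k * (3.15:ℝ)^k := by
      calc (2:ℝ)^(k-1) * π^k * 2 = (2^(k-1) * 2) * π^k := by ring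
        _ = 2^k * π^k := by rw [h2k]
        _ ≤ 2^k * (3.15:ℝ)^k := by
            apply mul_le_mul_of_nonneg_left hπk (by positivity)
    have he : (2:ℝ)^k * (3.15:ℝ)^k = (63/10)^k := by
      rw [← mul_pow]; norm_num
    rw [he] at this
    linarith
  have hchain : (k:ℝ) * (63/10)^k < ((63/10)^k / 2) * |((bernoulli k : ℚ) : ℝ)| := by
    calc (k:ℝ) * (63/10)^k < ((k)! : ℝ) := hfR
      _ ≤ 2^(k-1) * π^k * |((bernoulli k : ℚ) : ℝ)| := hb
      _ ≤ ((63/10)^k / 2) * |((bernoulli k : ℚ) : ℝ)| :=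
          mul_le_mul_of_nonneg_right hp2 (abs_nonneg _)
  have hpos : (0:ℝ) < (63/10:ℝ)^k / 2 := by positivity
  have h3 : (2*(k:ℝ)) * ((63/10)^k / 2) < |((bernoulli k : ℚ) : ℝ)| * ((63/10)^k / 2) := by
    nlinarith [hchain]
  exact lt_of_mul_lt_mul_right h3 hpos.le


private lemma case12 (m : ℤ) (hm : (2 * ((12:ℕ):ℚ)) / bernoulli 12 = (m:ℚ)) : False := by
  have hne : bernoulli 12 ≠ 0 := by rw [bern12]; norm_num
  rw [div_eq_iff hne, bern12] at hm
  have hq : (m:ℚ) * 691 = -65520 := by field_simp at hm; push_cast at hm; linarith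
  have : (m:ℤ) * 691 = -65520 := by exact_mod_cast hq
  omega

private lemma case16 (m : ℤ) (hm : (2 * ((16:ℕ):ℚ)) / bernoulli 16 = (m:ℚ)) : False := by
  have hne : bernoulli 16 ≠ 0 := by rw [bern16]; norm_num
  rw [div_eq_iff hne, bern16] at hm
  have hq : (m:ℚ) * 3617 = -16320 := by field_simp at hm; push_cast at hm; linarith
  have : (m:ℤ) * 3617 = -16320 := by exact_mod_cast hq
  omega

/-- For every even integer `k ≥ 2`, if the rational number `2k/B_k` is an integer (with `B_k`
the `k`-th Bernoulli number, nonzero for even `k`), then `k ∈ {2, 4, 6, 8, 10, 14}`. -/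
theorem rankin_cohen_stmt18 (k : ℕ) (hk : 2 ≤ k) (hke : Even k)
    (h : ∃ m : ℤ, (2 * k : ℚ) / bernoulli k = (m : ℚ)) :
    k = 2 ∨ k = 4 ∨ k = 6 ∨ k = 8 ∨ k = 10 ∨ k = 14 := by
  obtain ⟨m, hm⟩ := h
  rcases lt_or_ge k 18 with hlt | hge
  · interval_cases k <;> first
      | exact absurd hke (by decide)
      | tauto
      | exact (case12 m hm).elim
      | exact (case16 m hm).elim
  · exfalso
    set q : ℚ := bernoulli k with hqdef
    have hbig : (2*k : ℝ) < |((q : ℚ) : ℝ)| := num_big hge hke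
    have hBne : q ≠ 0 := by
      intro h0
      rw [h0] at hbig
      simp at hbig
      have : (0:ℝ) ≤ 2*(k:ℝ) := by positivity
      linarith
    rw [div_eq_iff hBne] at hm
    have hdenQ : ((q.den : ℚ)) ≠ 0 := by
      exact_mod_cast q.den_nz
    have hqnum : (q.num : ℚ) = q * q.den := by
      calc (q.num:ℚ) = (q.num:ℚ)/q.den * q.den := (div_mul_cancel₀ _ hdenQ).symm
        _ = q * q.den := by rw [Rat.num_div_den q]
    have hz : (m * q.num : ℤ) = 2*(k:ℤ)*q.den := by
      have : ((m * q.num : ℤ) : ℚ) = ((2*(k:ℤ)*q.den : ℤ) : ℚ) := by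
        push_cast
        rw [hqnum]
        calc (m:ℚ) * (q * q.den) = ((m:ℚ) * q) * q.den := by ring
          _ = (2*(k:ℚ)) * q.den := by rw [← hm]
          _ = 2*(k:ℚ)*q.den := by ring
      exact_mod_cast this
    have hdvd : q.num ∣ (2*(k:ℤ)*q.den) := ⟨m, by rw [← hz]; ring⟩
    have hdvdN : q.num.natAbs ∣ 2*k*q.den := by
      have := Int.natAbs_dvd_natAbs.mpr hdvd
      simpa [Int.natAbs_mul] using this
    have hdvd2k : q.num.natAbs ∣ 2*k :=
      Nat.Coprime.dvd_of_dvd_mul_right q.reduced hdvdN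
    have hle : q.num.natAbs ≤ 2*k := Nat.le_of_dvd (by omega) hdvd2k
    -- |q| ≤ |num|
    have habs : |q| ≤ (q.num.natAbs : ℚ) := by
      have h1 : |(q.num:ℚ)| = |q| * q.den := by
        rw [hqnum, abs_mul, abs_of_nonneg (by positivity : (0:ℚ) ≤ (q.den:ℚ))]
      have hden1 : (1:ℚ) ≤ q.den := by
        exact_mod_cast q.pos
      have h2 : |q| * 1 ≤ |q| * q.den :=
        mul_le_mul_of_nonneg_left hden1 (abs_nonneg _)
      have hnn : ((q.num.natAbs : ℚ)) = |(q.num : ℚ)| := by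
        simp [Nat.cast_natAbs]
      rw [hnn]
      calc |q| = |q| * 1 := by ring
        _ ≤ |q| * q.den := h2
        _ = |(q.num:ℚ)| := h1.symm
    have habsR : |((q : ℚ) : ℝ)| ≤ (q.num.natAbs : ℝ) := by
      rw [← Rat.cast_abs]
      exact_mod_cast habs
    have hleR : (q.num.natAbs : ℝ) ≤ 2*(k:ℝ) := by exact_mod_cast hle
    linarith
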